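/- Let 1 ≤ ℓ ≤ d be integers, let T(x) = Σ_{j=0}^d c_j x^j be a real polynomial of degree d, and define g : {±1}^n → ℝ by g(x) = T((x_1 + ⋯ + x_n)/n). Then the degree-ℓ homogeneous part g_ℓ of g satisfies |g_ℓ(1^n)| ≥ |c_ℓ| − (2·(d+1)!·max_{ℓ ≤ j ≤ d} |c_j|)/n, where 1^n is the all-ones input. -/

import Mathlib

/-- The sign ±1 corresponding to a boolean: `true ↦ 1`, `false ↦ -1`. -/
noncomputable def sgn (b : Bool) : ℝ := if b then 1 else -1

/-- The character (monomial) `χ_S(x) = ∏_{j ∈ S} x_j` on the cube `{±1}^n`. -/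
noncomputable def chi {n : ℕ} (S : Finset (Fin n)) (x : Fin n → Bool) : ℝ :=
  ∏ i ∈ S, sgn (x i)

/-- The Fourier coefficient `f̂(S) = E[f(X) χ_S(X)]` for `X` uniform on `{±1}^n`. -/
noncomputable def fcoeff {n : ℕ} (f : (Fin n → Bool) → ℝ) (S : Finset (Fin n)) : ℝ :=
  (∑ x : Fin n → Bool, f x * chi S x) / 2 ^ n

/-- The degree-`ℓ` homogeneous part `f_ℓ(x) = ∑_{|S| = ℓ} f̂(S) χ_S(x)`. -/
noncomputable def homPart {n : ℕ} (f : (Fin n → Bool) → ℝ) (ℓ : ℕ) (x : Fin n → Bool) : ℝ :=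
  ∑ S ∈ Finset.univ.filter (fun S : Finset (Fin n) => S.card = ℓ), fcoeff f S * chi S x

/-- `C(d, ℓ)`: the coefficient of `z^ℓ` in the degree-`d` Chebyshev polynomial `T_d`. -/
noncomputable def chebCoeff (d ℓ : ℕ) : ℝ := (Polynomial.Chebyshev.T ℝ (d : ℤ)).coeff ℓ

open Finset

lemma sgn_mul_self (b : Bool) : sgn b * sgn b = 1 := by
  cases b <;> simp [sgn]

lemma sgn_pow (b : Bool) (m : ℕ) : sgn b ^ m = if Odd m then sgn b else 1 := by
  cases b <;> simp [sgn, Odd.neg_one_pow, pow_eq_one_iff_cases]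
  · rcases Nat.even_or_odd m with h | h
    · simp [h, h.neg_one_pow, Nat.not_odd_iff_even.2 h]
    · simp [h, h.neg_one_pow]

lemma sum_chi {n : ℕ} (S : Finset (Fin n)) :
    ∑ x : Fin n → Bool, chi S x = if S = ∅ then (2:ℝ)^n else 0 := by
  have h : ∀ x : Fin n → Bool, chi S x = ∏ i, (if i ∈ S then sgn (x i) else 1) := by
    intro x
    rw [chi, ← Finset.prod_filter]
    congr 1
    simp [Finset.filter_mem_eq_inter]
  simp_rw [h]
  have := Finset.prod_univ_sum (fun _ : Fin n => (Finset.univ : Finset Bool))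
    (fun i b => if i ∈ S then sgn b else 1)
  rw [Fintype.piFinset_univ] at this
  rw [← this]
  have hb : ∀ i : Fin n, (∑ b : Bool, if i ∈ S then sgn b else 1)
      = if i ∈ S then 0 else 2 := by
    intro i; by_cases hi : i ∈ S <;> simp [hi, sgn]
  simp_rw [hb]
  by_cases hS : S = ∅
  · simp [hS]
  · rw [if_neg hS]
    obtain ⟨i, hi⟩ := Finset.nonempty_iff_ne_empty.2 hS
    exact Finset.prod_eq_zero (Finset.mem_univ i) (by simp [hi])

lemma chi_mul_chi {n : ℕ} (S T : Finset (Fin n)) (x : Fin n → Bool) :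
    chi S x * chi T x = chi (symmDiff S T) x := by
  classical
  have hS : S = (S \ T) ∪ (S ∩ T) := by
    ext i; by_cases h : i ∈ T <;> simp [h]
  have hT : T = (T \ S) ∪ (S ∩ T) := by
    ext i; by_cases h : i ∈ S <;> simp [h]
  have hchiS : chi S x = chi (S \ T) x * chi (S ∩ T) x := by
    rw [chi, chi, chi, ← Finset.prod_union (by simp [Finset.disjoint_left]; tauto), ← hS]
  have hchiT : chi T x = chi (T \ S) x * chi (S ∩ T) x := by
    rw [chi, chi, chi, ← Finset.prod_union (by simp [Finset.disjoint_left]; tauto), ← hT]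
  have hsd : chi (symmDiff S T) x = chi (S \ T) x * chi (T \ S) x := by
    rw [symmDiff_def, chi, chi, chi]
    rw [← Finset.prod_union]
    · rfl
    · simp [Finset.disjoint_left]; tauto
  have hsq : chi (S ∩ T) x * chi (S ∩ T) x = 1 := by
    rw [chi, ← Finset.prod_mul_distrib]
    exact Finset.prod_eq_one fun i _ => sgn_mul_self _
  rw [hchiS, hchiT, hsd]
  ring_nf
  rw [sq, hsq]
  ring

lemma sum_chi_mul {n : ℕ} (S T : Finset (Fin n)) :
    ∑ x : Fin n → Bool, chi S x * chi T x = if S = T then (2:ℝ)^n else 0 := by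
  simp_rw [chi_mul_chi]
  rw [sum_chi]
  congr 1
  simp [symmDiff_eq_bot]

def fiber {j n : ℕ} (p : Fin j → Fin n) (i : Fin n) : Finset (Fin j) :=
  Finset.univ.filter fun k => p k = i

def oddset {j n : ℕ} (p : Fin j → Fin n) : Finset (Fin n) :=
  Finset.univ.filter fun i => Odd (fiber p i).card

lemma prod_sgn_eq_chi {j n : ℕ} (p : Fin j → Fin n) (x : Fin n → Bool) :
    ∏ k, sgn (x (p k)) = chi (oddset p) x := by
  classical
  rw [← Finset.prod_fiberwise Finset.univ p (fun k => sgn (x (p k)))]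
  have h : ∀ i : Fin n, ∏ k ∈ Finset.univ.filter fun k => p k = i, sgn (x (p k))
      = sgn (x i) ^ (fiber p i).card := by
    intro i
    have he : ∏ k ∈ Finset.univ.filter fun k => p k = i, sgn (x (p k))
        = ∏ _k ∈ Finset.univ.filter fun k => p k = i, sgn (x i) :=
      Finset.prod_congr rfl (fun k hk => by rw [(Finset.mem_filter.1 hk).2])
    rw [he, Finset.prod_const]
    rfl
  simp_rw [h, sgn_pow]
  rw [chi, ← Finset.prod_filter]
  rfl

lemma pow_sum_eq {n : ℕ} (x : Fin n → Bool) (j : ℕ) :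
    (∑ i, sgn (x i)) ^ j = ∑ p : Fin j → Fin n, chi (oddset p) x := by
  rw [Finset.sum_pow' Finset.univ (fun i => sgn (x i)) j]
  rw [Fintype.piFinset_univ]
  exact Finset.sum_congr rfl fun p _ => prod_sgn_eq_chi p x

def cnt (n j ℓ : ℕ) : ℕ :=
  (Finset.univ.filter fun p : Fin j → Fin n => (oddset p).card = ℓ).card

lemma homPart_pow (n j ℓ : ℕ) :
    homPart (fun x : Fin n → Bool => (∑ i, sgn (x i)) ^ j) ℓ (fun _ => true) = cnt n j ℓ := by
  classical
  have hchi1 : ∀ S : Finset (Fin n), chi S (fun _ => true) = 1 := by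
    intro S; rw [chi]; exact Finset.prod_eq_one fun i _ => by simp [sgn]
  have hfc : ∀ S : Finset (Fin n),
      fcoeff (fun x : Fin n → Bool => (∑ i, sgn (x i)) ^ j) S
        = ((Finset.univ.filter fun p : Fin j → Fin n => oddset p = S).card : ℝ) := by
    intro S
    rw [fcoeff]
    simp_rw [pow_sum_eq, Finset.sum_mul, Finset.sum_comm (γ := Fin n → Bool)]
    simp_rw [sum_chi_mul]
    rw [← Finset.sum_filter, Finset.sum_const, nsmul_eq_mul]
    field_simp
  rw [homPart]
  simp_rw [hfc, hchi1, mul_one]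
  have hcard := Finset.card_eq_sum_card_fiberwise
    (f := fun p : Fin j → Fin n => oddset p)
    (s := Finset.univ.filter fun p : Fin j → Fin n => (oddset p).card = ℓ)
    (t := Finset.univ.filter fun S : Finset (Fin n) => S.card = ℓ)
    (by intro p hp; rw [Finset.mem_coe, Finset.mem_filter] at hp ⊢; exact ⟨Finset.mem_univ _, hp.2⟩)
  have hre : ∀ S ∈ Finset.univ.filter fun S : Finset (Fin n) => S.card = ℓ,
      ((Finset.univ.filter fun p : Fin j → Fin n => (oddset p).card = ℓ).filter
        fun p => oddset p = S).card
      = (Finset.univ.filter fun p : Fin j → Fin n => oddset p = S).card := by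
    intro S hS
    rw [Finset.mem_filter] at hS
    congr 1
    ext p
    simp only [Finset.mem_filter, Finset.mem_univ, true_and, Finset.filter_filter]
    constructor
    · exact fun h => h.2
    · intro h; exact ⟨by rw [h, hS.2], h⟩
  rw [Finset.sum_congr rfl hre] at hcard
  rw [cnt, hcard, Nat.cast_sum]

lemma fiber_sum {j n : ℕ} (p : Fin j → Fin n) :
    ∑ i : Fin n, (fiber p i).card = j := by
  classical
  have := Finset.card_eq_sum_card_fiberwise
    (f := p) (s := (Finset.univ : Finset (Fin j))) (t := Finset.univ)
    (fun k _ => Finset.mem_univ _)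
  simpa [fiber] using this.symm

lemma oddset_card_le {j n : ℕ} (p : Fin j → Fin n) : (oddset p).card ≤ j := by
  classical
  calc (oddset p).card ≤ ∑ i ∈ oddset p, (fiber p i).card := by
        refine Finset.card_nsmul_le_sum (oddset p) _ 1 ?_ |>.trans_eq' (by simp)
        intro i hi
        rw [oddset, Finset.mem_filter] at hi
        exact hi.2.pos
    _ ≤ ∑ i : Fin n, (fiber p i).card :=
        Finset.sum_le_sum_of_subset (Finset.subset_univ _)
    _ = j := fiber_sum p

lemma oddset_card_of_injective {j n : ℕ} {p : Fin j → Fin n}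
    (hp : Function.Injective p) : (oddset p).card = j := by
  classical
  have him : oddset p = Finset.univ.image p := by
    ext i
    simp only [oddset, Finset.mem_filter, Finset.mem_univ, true_and]
    rw [Finset.mem_image]
    constructor
    · intro h
      obtain ⟨k, hk⟩ := Finset.card_pos.1 h.pos
      exact ⟨k, Finset.mem_univ _, (Finset.mem_filter.1 hk).2⟩
    · rintro ⟨k, -, rfl⟩
      have : fiber p (p k) = {k} := by
        ext k'; simp [fiber, hp.eq_iff]
      rw [this]
      simp
  rw [him, Finset.card_image_of_injective _ hp]
  simp

lemma injective_of_oddset_card {ℓ n : ℕ} {p : Fin ℓ → Fin n}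
    (hp : (oddset p).card = ℓ) : Function.Injective p := by
  classical
  have hone : ∀ i : Fin n, (fiber p i).card ≤ 1 := by
    intro i0
    by_contra h
    push_neg at h
    have h2 : 2 ≤ (fiber p i0).card := h
    have hodd1 : ∀ i ∈ oddset p, 1 ≤ (fiber p i).card := fun i hi =>
      ((Finset.mem_filter.1 hi).2).pos
    by_cases hi0 : i0 ∈ oddset p
    · have hlt : ∑ i ∈ oddset p, 1 < ∑ i ∈ oddset p, (fiber p i).card :=
        Finset.sum_lt_sum hodd1 ⟨i0, hi0, by omega⟩
      have hle : ∑ i ∈ oddset p, (fiber p i).card ≤ ℓ := by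
        have h1 : ∑ i ∈ oddset p, (fiber p i).card ≤ ∑ i : Fin n, (fiber p i).card :=
          Finset.sum_le_sum_of_subset (Finset.subset_univ _)
        have h2 := fiber_sum p
        omega
      simp only [Finset.sum_const, smul_eq_mul, mul_one] at hlt
      omega
    · have hsub : insert i0 (oddset p) ⊆ Finset.univ := Finset.subset_univ _
      have : ∑ i ∈ insert i0 (oddset p), (fiber p i).card ≤ ℓ := by
        have h1 : ∑ i ∈ insert i0 (oddset p), (fiber p i).card
            ≤ ∑ i : Fin n, (fiber p i).card := Finset.sum_le_sum_of_subset hsub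
        have h2 := fiber_sum p
        omega
      rw [Finset.sum_insert hi0] at this
      have : 2 + ∑ i ∈ oddset p, 1 ≤ ℓ := by
        have := Finset.sum_le_sum hodd1
        omega
      simp only [Finset.sum_const, smul_eq_mul, mul_one] at this
      omega
  intro a b hab
  have ha : a ∈ fiber p (p b) := by simp [fiber, hab]
  have hb : b ∈ fiber p (p b) := by simp [fiber]
  exact Finset.card_le_one.1 (hone (p b)) a ha b hb

lemma cnt_eq_zero {n j ℓ : ℕ} (h : j < ℓ) : cnt n j ℓ = 0 := by
  rw [cnt, Finset.card_eq_zero, Finset.filter_eq_empty_iff]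
  intro p _
  have := oddset_card_le p
  omega

lemma card_filter_injective (n j : ℕ) :
    (Finset.univ.filter fun p : Fin j → Fin n => Function.Injective p).card
      = n.descFactorial j := by
  classical
  rw [← Fintype.card_subtype]
  rw [Fintype.card_congr (Equiv.subtypeInjectiveEquivEmbedding (Fin j) (Fin n))]
  rw [Fintype.card_embedding_eq, Fintype.card_fin, Fintype.card_fin]

lemma cnt_diag (n ℓ : ℕ) : cnt n ℓ ℓ = n.descFactorial ℓ := by
  classical
  have hiff : ∀ p : Fin ℓ → Fin n, (oddset p).card = ℓ ↔ Function.Injective p :=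
    fun p => ⟨injective_of_oddset_card, oddset_card_of_injective⟩
  rw [cnt]
  rw [Finset.filter_congr (fun p _ => by rw [hiff p])]
  exact card_filter_injective n ℓ

lemma cnt_add_le {n j ℓ : ℕ} (h : ℓ ≠ j) : cnt n j ℓ + n.descFactorial j ≤ n ^ j := by
  classical
  have hdisj : Disjoint (Finset.univ.filter fun p : Fin j → Fin n => (oddset p).card = ℓ)
      (Finset.univ.filter fun p : Fin j → Fin n => Function.Injective p) := by
    rw [Finset.disjoint_left]
    intro p hp1 hp2
    rw [Finset.mem_filter] at hp1 hp2
    have h1 := hp1.2; have h2 := oddset_card_of_injective hp2.2; omega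
  have hcard := Finset.card_union_of_disjoint hdisj
  have hle : ((Finset.univ.filter fun p : Fin j → Fin n => (oddset p).card = ℓ)
      ∪ (Finset.univ.filter fun p : Fin j → Fin n => Function.Injective p)).card
      ≤ (Finset.univ : Finset (Fin j → Fin n)).card :=
    Finset.card_le_card (Finset.subset_univ _)
  rw [hcard] at hle
  rw [card_filter_injective n j] at hle
  have huniv : (Finset.univ : Finset (Fin j → Fin n)).card = n ^ j := by
    rw [Finset.card_univ, Fintype.card_fun, Fintype.card_fin, Fintype.card_fin]
  rw [huniv] at hle
  exact hle

lemma pow_le_descFactorial_add (n : ℕ) :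
    ∀ j : ℕ, n ^ (j+1) ≤ n.descFactorial (j+1) + Nat.choose (j+1) 2 * n ^ j := by
  intro j
  induction j with
  | zero => simp
  | succ j ih =>
    have hd : n.descFactorial (j+2) = (n - (j+1)) * n.descFactorial (j+1) := by
      rw [Nat.descFactorial_succ]
    have hdle : n.descFactorial (j+1) ≤ n ^ (j+1) := Nat.descFactorial_le_pow n (j+1)
    have hch : Nat.choose (j+2) 2 = (j+1) + Nat.choose (j+1) 2 := by
      rw [Nat.choose_succ_succ, Nat.choose_one_right]
    have hn : n * n.descFactorial (j+1)
        ≤ (n - (j+1)) * n.descFactorial (j+1) + (j+1) * n.descFactorial (j+1) := by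
      rw [← Nat.add_mul]
      exact Nat.mul_le_mul_right _ (by omega)
    calc n ^ (j+2) = n * n ^ (j+1) := by ring
      _ ≤ n * (n.descFactorial (j+1) + Nat.choose (j+1) 2 * n ^ j) :=
          Nat.mul_le_mul_left n ih
      _ = n * n.descFactorial (j+1) + Nat.choose (j+1) 2 * n ^ (j+1) := by ring
      _ ≤ (n - (j+1)) * n.descFactorial (j+1) + (j+1) * n.descFactorial (j+1)
            + Nat.choose (j+1) 2 * n ^ (j+1) := by omega
      _ ≤ n.descFactorial (j+2) + (j+1) * n ^ (j+1) + Nat.choose (j+1) 2 * n ^ (j+1) := by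
          rw [hd]
          have := Nat.mul_le_mul_left (j+1) hdle
          omega
      _ = n.descFactorial (j+2) + Nat.choose (j+2) 2 * n ^ (j+1) := by rw [hch]; ring

lemma succ_le_two_factorial : ∀ d : ℕ, d + 1 ≤ 2 * d.factorial
  | 0 => by simp
  | (d+1) => by
    have h : 2 * (d+1).factorial = (d+1) * (2 * d.factorial) := by
      rw [Nat.factorial_succ]; ring
    have h1 : 1 ≤ d.factorial := Nat.one_le_iff_ne_zero.2 (Nat.factorial_ne_zero d)
    have : (d+1) * 2 ≤ (d+1) * (2 * d.factorial) :=
      Nat.mul_le_mul_left _ (by omega)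
    omega

lemma sq_le_two_factorial (d : ℕ) : d ^ 2 ≤ 2 * d.factorial := by
  cases d with
  | zero => simp
  | succ d =>
    have h : 2 * (d+1).factorial = (d+1) * (2 * d.factorial) := by
      rw [Nat.factorial_succ]; ring
    rw [h, pow_two]
    exact Nat.mul_le_mul_left _ (succ_le_two_factorial d)

lemma card_mul_sq_le (d : ℕ) : (d + 1) * d ^ 2 ≤ 2 * (d+1).factorial := by
  have h : 2 * (d+1).factorial = (d+1) * (2 * d.factorial) := by
    rw [Nat.factorial_succ]; ring
  rw [h]
  exact Nat.mul_le_mul_left _ (sq_le_two_factorial d)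

lemma homPart_lin {n : ℕ} (d ℓ : ℕ) (a : ℕ → ℝ) (g : (Fin n → Bool) → ℝ)
    (hg : ∀ x, g x = ∑ j ∈ Finset.range (d+1), a j * (∑ i, sgn (x i)) ^ j)
    (y : Fin n → Bool) :
    homPart g ℓ y
      = ∑ j ∈ Finset.range (d+1),
          a j * homPart (fun x : Fin n → Bool => (∑ i, sgn (x i)) ^ j) ℓ y := by
  have hfc : ∀ S : Finset (Fin n), fcoeff g S
      = ∑ j ∈ Finset.range (d+1),
          a j * fcoeff (fun x : Fin n → Bool => (∑ i, sgn (x i)) ^ j) S := by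
    intro S
    rw [fcoeff]
    simp_rw [hg, Finset.sum_mul]
    rw [Finset.sum_comm, Finset.sum_div]
    refine Finset.sum_congr rfl fun j _ => ?_
    rw [fcoeff]
    simp_rw [mul_assoc]
    rw [← Finset.mul_sum, mul_div_assoc]
  rw [homPart]
  simp_rw [hfc, Finset.sum_mul]
  rw [Finset.sum_comm]
  refine Finset.sum_congr rfl fun j _ => ?_
  rw [homPart, Finset.mul_sum]
  exact Finset.sum_congr rfl fun S _ => by ring


/-- If `T(x) = Σ_{j=0}^d c_j x^j` is a real polynomial of degree `d`, `1 ≤ ℓ ≤ d`, and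
`g(x) = T((x_1 + ⋯ + x_n)/n)` on `{±1}^n`, then
`|g_ℓ(1^n)| ≥ |c_ℓ| − 2·(d+1)!·max_{ℓ ≤ j ≤ d} |c_j| / n`. -/
theorem stmt14 (n d ℓ : ℕ) (hn : 0 < n) (hℓ : 1 ≤ ℓ) (hld : ℓ ≤ d)
    (c : ℕ → ℝ) (hc : c d ≠ 0)
    (g : (Fin n → Bool) → ℝ)
    (hg : ∀ x, g x = ∑ j ∈ Finset.range (d + 1), c j * ((∑ i, sgn (x i)) / n) ^ j) :
    |c ℓ| - 2 * (Nat.factorial (d + 1)) *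
        ((Finset.Icc ℓ d).sup' (Finset.nonempty_Icc.mpr hld) fun j => |c j|) / n ≤
      |homPart g ℓ (fun _ => true)| := by
  have hn' : (0:ℝ) < n := by exact_mod_cast hn
  set M : ℝ := (Finset.Icc ℓ d).sup' (Finset.nonempty_Icc.mpr hld) (fun j => |c j|) with hM
  have hmem : ℓ ∈ Finset.Icc ℓ d := Finset.mem_Icc.2 ⟨le_refl _, hld⟩
  have hMc : ∀ j ∈ Finset.Icc ℓ d, |c j| ≤ M := by
    intro j hj
    rw [hM]
    exact Finset.le_sup' (fun j => |c j|) hj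
  have hM0 : 0 ≤ M := le_trans (abs_nonneg _) (hMc ℓ hmem)
  have hg' : ∀ x, g x = ∑ j ∈ Finset.range (d+1),
      (c j / (n:ℝ)^j) * (∑ i, sgn (x i)) ^ j := by
    intro x; rw [hg x]
    refine Finset.sum_congr rfl fun j _ => ?_
    rw [div_pow]; ring
  have hp : homPart g ℓ (fun _ => true)
      = ∑ j ∈ Finset.range (d+1), (c j / (n:ℝ)^j) * (cnt n j ℓ : ℝ) := by
    rw [homPart_lin d ℓ _ g hg']
    exact Finset.sum_congr rfl fun j _ => by rw [homPart_pow]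
  have hsplit : homPart g ℓ (fun _ => true)
      = ∑ j ∈ Finset.Icc ℓ d, (c j / (n:ℝ)^j) * (cnt n j ℓ : ℝ) := by
    rw [hp, Finset.range_eq_Ico,
      ← Finset.sum_Ico_consecutive _ (Nat.zero_le ℓ) (by omega : ℓ ≤ d+1)]
    have h0 : ∑ j ∈ Finset.Ico 0 ℓ, (c j / (n:ℝ)^j) * (cnt n j ℓ : ℝ) = 0 := by
      refine Finset.sum_eq_zero fun j hj => ?_
      rw [Finset.mem_Ico] at hj
      rw [cnt_eq_zero hj.2]; simp
    rw [h0, zero_add, Finset.Ico_add_one_right_eq_Icc]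
  have hcl : c ℓ = ∑ j ∈ Finset.Icc ℓ d, (if j = ℓ then c ℓ else 0) := by
    rw [Finset.sum_ite_eq' (Finset.Icc ℓ d) ℓ (fun _ => c ℓ), if_pos hmem]
  have key : ∀ j ∈ Finset.Icc ℓ d,
      |(c j / (n:ℝ)^j) * (cnt n j ℓ : ℝ) - (if j = ℓ then c ℓ else 0)|
        ≤ M * ((d:ℝ)^2 / n) := by
    intro j hj
    rw [Finset.mem_Icc] at hj
    obtain ⟨m, rfl⟩ : ∃ m, j = m + 1 := ⟨j - 1, by omega⟩
    have hPpos : (0:ℝ) < (n:ℝ)^(m+1) := pow_pos hn' _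
    have hDP : ((n.descFactorial (m+1) : ℕ) : ℝ) ≤ (n:ℝ)^(m+1) := by
      have := Nat.descFactorial_le_pow n (m+1)
      exact_mod_cast this
    have hD0 : (0:ℝ) ≤ ((n.descFactorial (m+1) : ℕ) : ℝ) := by positivity
    have hPD : (n:ℝ)^(m+1)
        ≤ ((n.descFactorial (m+1) : ℕ) : ℝ) + ((Nat.choose (m+1) 2 : ℕ) : ℝ) * (n:ℝ)^m := by
      have := pow_le_descFactorial_add n m
      exact_mod_cast this
    have hfrac : ((n:ℝ)^(m+1) - (n.descFactorial (m+1) : ℕ)) / (n:ℝ)^(m+1)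
        ≤ ((Nat.choose (m+1) 2 : ℕ) : ℝ) / n := by
      rw [div_le_div_iff₀ hPpos hn']
      have h2 : ((n:ℝ)^(m+1) - (n.descFactorial (m+1) : ℕ)) * n
          ≤ ((Nat.choose (m+1) 2 : ℕ) : ℝ) * (n:ℝ)^m * n :=
        mul_le_mul_of_nonneg_right (by linarith) (le_of_lt hn')
      refine h2.trans_eq ?_
      rw [pow_succ]; ring
    have hch : ((Nat.choose (m+1) 2 : ℕ) : ℝ) / n ≤ (d:ℝ)^2 / n := by
      have h1 : Nat.choose (m+1) 2 ≤ (m+1)^2 := Nat.choose_le_pow _ _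
      have h2 : (m+1)^2 ≤ d^2 := Nat.pow_le_pow_left (by omega) 2
      have h3 : ((Nat.choose (m+1) 2 : ℕ) : ℝ) ≤ (d:ℝ)^2 := by exact_mod_cast h1.trans h2
      gcongr
    have hbd : ((n:ℝ)^(m+1) - (n.descFactorial (m+1) : ℕ)) / (n:ℝ)^(m+1) ≤ (d:ℝ)^2 / n :=
      hfrac.trans hch
    have hfrac0 : (0:ℝ) ≤ ((n:ℝ)^(m+1) - (n.descFactorial (m+1) : ℕ)) / (n:ℝ)^(m+1) :=
      div_nonneg (by linarith) (le_of_lt hPpos)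
    have hcM : |c (m+1)| ≤ M := hMc _ (Finset.mem_Icc.2 hj)
    by_cases hje : m + 1 = ℓ
    · rw [if_pos hje]
      have hℓeq : ℓ = m + 1 := hje.symm
      subst hℓeq
      rw [cnt_diag]
      have heq : ∀ cc PP DD : ℝ, PP ≠ 0 → cc / PP * DD - cc = cc * ((DD - PP)/PP) := by
        intro cc PP DD hPP; field_simp
      rw [heq _ _ _ (ne_of_gt hPpos), abs_mul, abs_div, abs_of_pos hPpos,
        abs_of_nonpos (by linarith : ((n.descFactorial (m+1) : ℕ) : ℝ) - (n:ℝ)^(m+1) ≤ 0)]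
      have hneg : -(((n.descFactorial (m+1) : ℕ) : ℝ) - (n:ℝ)^(m+1)) / (n:ℝ)^(m+1)
          = ((n:ℝ)^(m+1) - (n.descFactorial (m+1) : ℕ)) / (n:ℝ)^(m+1) := by ring
      rw [hneg]
      exact mul_le_mul hcM hbd hfrac0 hM0
    · rw [if_neg hje, sub_zero]
      have hcnt : ((cnt n (m+1) ℓ : ℕ) : ℝ)
          ≤ (n:ℝ)^(m+1) - ((n.descFactorial (m+1) : ℕ) : ℝ) := by
        have h := cnt_add_le (n := n) (fun h' => hje h'.symm)
        have h' : ((cnt n (m+1) ℓ : ℕ) : ℝ) + ((n.descFactorial (m+1) : ℕ) : ℝ)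
            ≤ (n:ℝ)^(m+1) := by exact_mod_cast h
        linarith
      have hcnt0 : (0:ℝ) ≤ ((cnt n (m+1) ℓ : ℕ) : ℝ) := by positivity
      rw [abs_mul, abs_div, abs_of_pos hPpos, abs_of_nonneg hcnt0]
      have hre : |c (m+1)| / (n:ℝ)^(m+1) * ((cnt n (m+1) ℓ : ℕ) : ℝ)
          = |c (m+1)| * (((cnt n (m+1) ℓ : ℕ) : ℝ) / (n:ℝ)^(m+1)) := by ring
      rw [hre]
      refine mul_le_mul hcM ?_ (by positivity) hM0
      refine le_trans ?_ hbd
      gcongr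
  have hdiff : |homPart g ℓ (fun _ => true) - c ℓ|
      ≤ (Finset.Icc ℓ d).card * (M * ((d:ℝ)^2 / n)) := by
    rw [hsplit]
    conv_lhs => rw [hcl]
    rw [← Finset.sum_sub_distrib]
    refine (Finset.abs_sum_le_sum_abs _ _).trans ?_
    refine (Finset.sum_le_sum key).trans_eq ?_
    rw [Finset.sum_const, nsmul_eq_mul]
  have hcard : ((Finset.Icc ℓ d).card : ℝ) ≤ (d:ℝ) + 1 := by
    rw [Nat.card_Icc]
    have : d + 1 - ℓ ≤ d + 1 := by omega
    exact_mod_cast this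
  have hfact : ((d:ℝ)+1) * (M * ((d:ℝ)^2 / n)) ≤ 2 * (Nat.factorial (d+1) : ℝ) * M / n := by
    have hnat : ((d+1) * d^2 : ℕ) ≤ (2 * (d+1).factorial : ℕ) := card_mul_sq_le d
    have hnatR : ((d:ℝ)+1) * (d:ℝ)^2 ≤ 2 * (Nat.factorial (d+1) : ℝ) := by exact_mod_cast hnat
    have h1 : ((d:ℝ)+1) * (M * ((d:ℝ)^2 / n)) = M * (((d:ℝ)+1) * (d:ℝ)^2) / n := by ring
    rw [h1]
    have h2 : M * (((d:ℝ)+1) * (d:ℝ)^2) ≤ M * (2 * (Nat.factorial (d+1) : ℝ)) :=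
      mul_le_mul_of_nonneg_left hnatR hM0
    have h3 : M * (((d:ℝ)+1) * (d:ℝ)^2) / n ≤ M * (2 * (Nat.factorial (d+1) : ℝ)) / n := by
      gcongr
    exact h3.trans_eq (by ring)
  have hsum : |homPart g ℓ (fun _ => true) - c ℓ| ≤ 2 * (Nat.factorial (d+1) : ℝ) * M / n := by
    refine hdiff.trans ?_
    refine le_trans ?_ hfact
    exact mul_le_mul_of_nonneg_right hcard (by positivity)
  have htri : |c ℓ| - |homPart g ℓ (fun _ => true)| ≤ |homPart g ℓ (fun _ => true) - c ℓ| := by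
    rw [abs_sub_comm]
    exact abs_sub_abs_le_abs_sub _ _
  linarith
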